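/- Let F be a field, V a 2-dimensional F-vector space, q : V → F a non-degenerate quadratic form, and a, b ∈ F with a ≠ 0 and b ≠ 0. Let w ∈ V with q(w) ≠ 0 and suppose w = u + v for some u, v with q(u) = a, q(v) = b. Then there exist two distinct pairs (u, v) ∈ V × V with q(u) = a, q(v) = b and u + v = w if and only if there exists such a pair (u, v) with u and v linearly independent. -/

import Mathlib

open QuadraticMap Module

private lemma key_refl {F V : Type*} [Field F] [AddCommGroup V] [Module F V]
    (q : QuadraticForm F V) (w : V) (hw : q w ≠ 0) (x : V) :
    q ((polar (⇑q) x w / q w) • w - x) = q x := by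
  set s : F := polar (⇑q) x w / q w with hs
  have hsw : s * q w = polar (⇑q) x w := div_mul_cancel₀ _ hw
  have key : q (s • w - x) = s * (s * q w - polar (⇑q) x w) + q x := by
    rw [sub_eq_add_neg, QuadraticMap.map_add (⇑q) (s • w) (-x), QuadraticMap.map_smul, QuadraticMap.map_neg,
      polar_smul_left, polar_neg_right, polar_comm (⇑q) w x, smul_eq_mul, smul_eq_mul]
    ring
  rw [key, hsw, sub_self, mul_zero, zero_add]

private lemma qf_polar_self {F V : Type*} [Field F] [AddCommGroup V] [Module F V]
    (q : QuadraticForm F V) (w : V) : polar (⇑q) w w = 2 * q w := by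
  have e1 : q (w + w) = q w + q w + polar (⇑q) w w := QuadraticMap.map_add (⇑q) w w
  have e2 : q (w + w) = 4 * q w := by
    rw [← two_smul F w, QuadraticMap.map_smul, smul_eq_mul]; ring
  linear_combination e2 - e1

/-- For a 2-dimensional non-degenerate quadratic form `q`, `a, b ≠ 0` and an anisotropic
vector `w ∈ V_a + V_b`, there exist two distinct pairs `(u, v) ∈ V_a × V_b` summing to `w`
iff there exists such a pair with `u, v` linearly independent. -/
theorem stmt_9 {F V : Type*} [Field F] [AddCommGroup V] [Module F V]
    (q : QuadraticForm F V) (hdim : Module.finrank F V = 2)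
    (hnd : ∀ x : V, (∀ y : V, polar (⇑q) x y = 0) → x = 0)
    (a b : F) (ha : a ≠ 0) (hb : b ≠ 0)
    (w : V) (hw : q w ≠ 0)
    (u v : V) (hu : q u = a) (hv : q v = b) (huv : u + v = w) :
    (∃ p₁ p₂ : V × V, p₁ ≠ p₂ ∧
        (q p₁.1 = a ∧ q p₁.2 = b ∧ p₁.1 + p₁.2 = w) ∧
        (q p₂.1 = a ∧ q p₂.2 = b ∧ p₂.1 + p₂.2 = w)) ↔
      (∃ u' v' : V, q u' = a ∧ q v' = b ∧ u' + v' = w ∧ LinearIndependent F ![u', v']) := by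
  constructor
  · rintro ⟨p₁, p₂, hne, ⟨h1a, h1b, h1s⟩, h2a, h2b, h2s⟩
    by_contra hcon
    push_neg at hcon
    have key : ∀ x y : V, q x = a → q y = b → x + y = w →
        ∃ c : F, c ≠ 0 ∧ 1 + c ≠ 0 ∧ c ^ 2 * a = b ∧ (1 + c) ^ 2 * a = q w ∧
          (1 + c)⁻¹ • w = x := by
      intro x y hqa hqb hsum
      have hdep : ¬ LinearIndependent F ![x, y] := fun h => hcon x y hqa hqb hsum h
      rw [LinearIndependent.pair_iff] at hdep
      push_neg at hdep
      obtain ⟨s, t, hst, hne0⟩ := hdep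
      have hx0 : x ≠ 0 := by
        intro h; rw [h, QuadraticMap.map_zero] at hqa; exact ha hqa.symm
      have hy0 : y ≠ 0 := by
        intro h; rw [h, QuadraticMap.map_zero] at hqb; exact hb hqb.symm
      have ht : t ≠ 0 := by
        intro h; subst h
        simp only [zero_smul, add_zero, smul_eq_zero] at hst
        rcases hst with h | h
        · exact hne0 h rfl
        · exact hx0 h
      have hs0 : s ≠ 0 := by
        intro h; subst h
        simp only [zero_smul, zero_add, smul_eq_zero] at hst
        rcases hst with h | h
        · exact ht h
        · exact hy0 h
      set c : F := -s / t with hc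
      have hcne : c ≠ 0 := div_ne_zero (neg_ne_zero.mpr hs0) ht
      have hy : y = c • x := by
        have h1 : t • y = -(s • x) := by
          rw [eq_neg_iff_add_eq_zero, add_comm]; exact hst
        have h2 : y = (t⁻¹ * (-s)) • x := by
          rw [mul_smul, neg_smul, ← h1, smul_smul, inv_mul_cancel₀ ht, one_smul]
        rw [h2]
        congr 1
        rw [hc, div_eq_inv_mul]
      have hb' : c ^ 2 * a = b := by
        rw [← hqb, hy, QuadraticMap.map_smul, smul_eq_mul, hqa]; ring
      have hw' : w = (1 + c) • x := by rw [← hsum, hy, add_smul, one_smul]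
      have hqw : (1 + c) ^ 2 * a = q w := by
        rw [hw', QuadraticMap.map_smul, smul_eq_mul, hqa]; ring
      have h1c : 1 + c ≠ 0 := by
        intro h
        apply hw
        rw [← hqw, h]
        ring
      refine ⟨c, hcne, h1c, hb', hqw, ?_⟩
      rw [hw', smul_smul, inv_mul_cancel₀ h1c, one_smul]
    obtain ⟨c₁, hc₁0, h1c₁, hb₁, hqw₁, hx₁⟩ := key p₁.1 p₁.2 h1a h1b h1s
    obtain ⟨c₂, hc₂0, h1c₂, hb₂, hqw₂, hx₂⟩ := key p₂.1 p₂.2 h2a h2b h2s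
    have hc12 : c₁ ≠ c₂ := by
      intro h
      apply hne
      have hx : p₁.1 = p₂.1 := by rw [← hx₁, ← hx₂, h]
      have hy : p₁.2 = p₂.2 := by
        calc p₁.2 = w - p₁.1 := by rw [← h1s]; abel
        _ = w - p₂.1 := by rw [hx]
        _ = p₂.2 := by rw [← h2s]; abel
      exact Prod.ext hx hy
    have e3 : (c₁ - c₂) * (c₁ + c₂) = 0 := by
      have e1 : (c₁ ^ 2 - c₂ ^ 2) * a = 0 := by rw [sub_mul, hb₁, hb₂, sub_self]
      have e2 : c₁ ^ 2 - c₂ ^ 2 = 0 := (mul_eq_zero.mp e1).resolve_right ha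
      linear_combination e2
    have hc2eq : c₂ = -c₁ := by
      rcases mul_eq_zero.mp e3 with h | h
      · exact absurd (by linear_combination h) hc12
      · linear_combination h
    have e4 : (4 : F) * c₁ = 0 := by
      have e5 : ((1 + c₁) ^ 2 - (1 + c₂) ^ 2) * a = 0 := by
        rw [sub_mul, hqw₁, hqw₂, sub_self]
      have e6 : (1 + c₁) ^ 2 - (1 + c₂) ^ 2 = 0 := (mul_eq_zero.mp e5).resolve_right ha
      linear_combination e6 + (2 + c₂ - c₁) * hc2eq
    rcases mul_eq_zero.mp e4 with h4 | h4
    · have h2 : (2 : F) = 0 := by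
        have h22 : (2 : F) * 2 = 0 := by linear_combination h4
        rcases mul_eq_zero.mp h22 with h | h <;> exact h
      exact hc12 (by linear_combination c₁ * h2 - hc2eq)
    · exact hc₁0 h4
  · rintro ⟨x, y, hqa, hqb, hsum, hind⟩
    set s : F := polar (⇑q) x w / q w with hs
    set t : F := polar (⇑q) y w / q w with ht
    have hqsa : q (s • w - x) = a := (key_refl q w hw x).trans hqa
    have hqtb : q (w - (s • w - x)) = b := by
      have h1 : polar (⇑q) x w + polar (⇑q) y w = 2 * q w := by
        rw [← polar_add_left, hsum, qf_polar_self]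
      have hst2 : s + t = 2 := by
        have h2 : (s + t) * q w = 2 * q w := by
          rw [add_mul, hs, ht, div_mul_cancel₀ _ hw, div_mul_cancel₀ _ hw]
          exact h1
        exact mul_right_cancel₀ hw h2
      have hyw : y = w - x := by rw [← hsum]; abel
      have heq : w - (s • w - x) = t • w - y := by
        rw [hyw, show t = 2 - s by linear_combination hst2]
        module
      rw [heq, key_refl q w hw y, hqb]
    refine ⟨(x, y), (s • w - x, w - (s • w - x)), ?_, ⟨hqa, hqb, hsum⟩,
      hqsa, hqtb, by module⟩
    intro hpe
    have hxe : x = s • w - x := congrArg Prod.fst hpe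
    have hxe' : x + x = s • w := by rw [eq_sub_iff_add_eq] at hxe; exact hxe
    have h3 : s • x + s • y = x + x := by rw [← smul_add, hsum, ← hxe']
    have hcomb : (s - 2) • x + s • y = 0 := by
      linear_combination (norm := module) h3
    obtain ⟨hs2, hs0⟩ := LinearIndependent.pair_iff.mp hind (s - 2) s hcomb
    have h2 : (2 : F) = 0 := by linear_combination hs0 - hs2
    have hpxw : polar (⇑q) x w = 0 := by
      rw [hs] at hs0
      exact (div_eq_zero_iff.mp hs0).resolve_right hw
    have hpxx : polar (⇑q) x x = 0 := by
      rw [qf_polar_self, h2, zero_mul]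
    have hpxy : polar (⇑q) x y = 0 := by
      rw [← hsum, polar_add_right, hpxx, zero_add] at hpxw
      exact hpxw
    have hspan : Submodule.span F ({x, y} : Set V) = ⊤ := by
      have h := hind.span_eq_top_of_card_eq_finrank (by simp [hdim])
      rwa [Matrix.range_cons_cons_empty] at h
    have hx00 : x = 0 := by
      apply hnd
      intro z
      have hz : z ∈ Submodule.span F ({x, y} : Set V) := hspan ▸ Submodule.mem_top
      obtain ⟨r, r', hrs⟩ := Submodule.mem_span_pair.mp hz
      rw [← hrs, polar_add_right, polar_smul_right, polar_smul_right, hpxx, hpxy]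
      simp
    rw [hx00, QuadraticMap.map_zero] at hqa
    exact ha hqa.symm
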